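/- For a morphism α : F → G in Sp (left-exact functors from C_Λ to Set), the following are equivalent: α is smooth; the induced morphism between the associated objects of cSp (given by A ↦ F(A_0)) is quasi-smooth; the induced morphism in cSp is smooth. -/

import Mathlib

open CategoryTheory Opposite

/-! ## The category `C_Λ` of local Artinian `Λ`-algebras with residue field `k`,
and the category `sC_Λ` of Artinian simplicial local `Λ`-algebras. -/

variable (Λ : Type) [CommRing Λ] [IsLocalRing Λ] [IsNoetherianRing Λ]
  [IsAdicComplete (IsLocalRing.maximalIdeal Λ) Λ]

/-- The residue field `k` of `Λ`. -/
abbrev resK := IsLocalRing.ResidueField Λ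

/-- An object of `C_Λ`: a local Artinian `Λ`-algebra whose residue field is
(canonically isomorphic to) `k`. -/
structure ArtAlg where
  carrier : Type
  [commRing : CommRing carrier]
  [algebra : Algebra Λ carrier]
  [artinian : IsArtinianRing carrier]
  [isLocal : IsLocalRing carrier]
  [localHom : IsLocalHom (algebraMap Λ carrier)]
  residue_bij : Function.Bijective
    (IsLocalRing.ResidueField.map (algebraMap Λ carrier))

attribute [instance] ArtAlg.commRing ArtAlg.algebra ArtAlg.artinian
  ArtAlg.isLocal ArtAlg.localHom

instance : Category (ArtAlg Λ) where
  Hom A B := A.carrier →ₐ[Λ] B.carrier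
  id A := AlgHom.id Λ A.carrier
  comp f g := g.comp f

/-- Interpret a morphism of `C_Λ` as an algebra homomorphism. -/
def ArtAlg.toAlg {Λ : Type} [CommRing Λ] [IsLocalRing Λ] [IsNoetherianRing Λ]
    [IsAdicComplete (IsLocalRing.maximalIdeal Λ) Λ] {A B : ArtAlg Λ}
    (f : A ⟶ B) : A.carrier →ₐ[Λ] B.carrier := f

/-- A morphism in `C_Λ` is surjective if its underlying map is. -/
def ArtAlg.Surjective {Λ : Type} [CommRing Λ] [IsLocalRing Λ] [IsNoetherianRing Λ]
    [IsAdicComplete (IsLocalRing.maximalIdeal Λ) Λ] {A B : ArtAlg Λ}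
    (f : A ⟶ B) : Prop := Function.Surjective (ArtAlg.toAlg f)

/-- The ideal `m(A)² + μ·m(A)` of `A`, by which one quotients the maximal ideal
to obtain the cotangent space `cot A = m(A)/(m(A)² + μ·m(A))`. -/
def cotDenom (R : ArtAlg Λ) : Ideal R.carrier :=
  (IsLocalRing.maximalIdeal R.carrier) ^ 2 ⊔
    ((IsLocalRing.maximalIdeal Λ).map (algebraMap Λ R.carrier) *
      IsLocalRing.maximalIdeal R.carrier)

/-- Vanishing, in degree `n`, of the normalisation `N(cot A)` of the cotangent
space of a simplicial object `X` of `C_Λ`: the normalisation in degree `n` is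
`⋂_{i>0} ker(∂ᵢ : (cot A)_n → (cot A)_{n-1})`. -/
def NormCotVanish (X : SimplicialObject (ArtAlg Λ)) : ℕ → Prop
  | 0 => ∀ x ∈ IsLocalRing.maximalIdeal (X.obj (op (SimplexCategory.mk (0)))).carrier,
      x ∈ cotDenom Λ (X.obj (op (SimplexCategory.mk (0))))
  | (n + 1) => ∀ x ∈ IsLocalRing.maximalIdeal (X.obj (op (SimplexCategory.mk (n + 1)))).carrier,
      (∀ i : Fin (n + 1), ArtAlg.toAlg (X.δ i.succ) x ∈ cotDenom Λ (X.obj (op (SimplexCategory.mk (n))))) →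
        x ∈ cotDenom Λ (X.obj (op (SimplexCategory.mk (n + 1))))

/-- An object of `sC_Λ`: an Artinian simplicial local `Λ`-algebra with residue
field `k`, i.e. a simplicial object of `C_Λ` whose normalised cotangent space
is concentrated in finitely many degrees and whose maximal ideal is (uniformly)
nilpotent (cf. Lemma 1.3 of the paper). -/
structure SArtAlg where
  X : SimplicialObject (ArtAlg Λ)
  nilpotent : ∃ n > 0, ∀ m : SimplexCategoryᵒᵖ,
    (IsLocalRing.maximalIdeal (X.obj m).carrier) ^ n = ⊥
  cotFinite : ∃ N : ℕ, ∀ n ≥ N, NormCotVanish Λ X n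

instance : Category (SArtAlg Λ) where
  Hom A B := A.X ⟶ B.X
  id A := 𝟙 A.X
  comp f g := f ≫ g

variable {Λ}

/-- The algebra homomorphism underlying a morphism of `sC_Λ` in simplicial degree `m`. -/
def SArtAlg.app {A B : SArtAlg Λ} (f : A ⟶ B) (m : SimplexCategoryᵒᵖ) :
    (A.X.obj m).carrier →ₐ[Λ] (B.X.obj m).carrier :=
  ArtAlg.toAlg (NatTrans.app f m)

/-- A morphism of `sC_Λ` is surjective if it is levelwise surjective. -/
def SArtAlg.Surj {A B : SArtAlg Λ} (f : A ⟶ B) : Prop :=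
  ∀ m, Function.Surjective (SArtAlg.app f m)

/-- Cycles for the Moore complex of a simplicial algebra:
`Z_i = {x ∈ A_i | ∂_j x = 0 for all j}` (in degrees `i > 0`), `Z_0 = A_0`. -/
def SArtAlg.isCycle (A : SArtAlg Λ) : ∀ i : ℕ, (A.X.obj (op (SimplexCategory.mk (i)))).carrier → Prop
  | 0, _ => True
  | (i + 1), x => ∀ j : Fin (i + 2), ArtAlg.toAlg (A.X.δ j) x = 0

/-- The boundary relation for the Moore complex: `x ~ y` iff `x - y = ∂₀ h` for
some `h` killed by all the other face maps. -/
def SArtAlg.mooreRel (A : SArtAlg Λ) (i : ℕ)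
    (x y : {z : (A.X.obj (op (SimplexCategory.mk (i)))).carrier // A.isCycle i z}) : Prop :=
  ∃ h : (A.X.obj (op (SimplexCategory.mk (i + 1)))).carrier,
    (∀ j : Fin (i + 1), ArtAlg.toAlg (A.X.δ j.succ) h = 0) ∧
      ArtAlg.toAlg (A.X.δ (0 : Fin (i + 2))) h = x.1 - y.1

/-- The homotopy group `π_i(A)` of a simplicial algebra, computed via the Moore complex. -/
def SArtAlg.pi (A : SArtAlg Λ) (i : ℕ) : Type := Quot (A.mooreRel i)

lemma SArtAlg.app_naturality {A B : SArtAlg Λ} (f : A ⟶ B) {m m' : SimplexCategoryᵒᵖ}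
    (g : m ⟶ m') (x : (A.X.obj m).carrier) :
    SArtAlg.app f m' (ArtAlg.toAlg (A.X.map g) x) =
      ArtAlg.toAlg (B.X.map g) (SArtAlg.app f m x) := by
  have h := NatTrans.naturality (self := f) g
  show ArtAlg.toAlg (A.X.map g ≫ NatTrans.app f m') x =
    ArtAlg.toAlg (NatTrans.app f m ≫ B.X.map g) x
  rw [h]

/-- The map induced by a morphism of `sC_Λ` on homotopy groups. -/
def SArtAlg.piMap {A B : SArtAlg Λ} (f : A ⟶ B) (i : ℕ) :
    A.pi i → B.pi i := by
  refine Quot.map (fun x => ⟨SArtAlg.app f (op (SimplexCategory.mk (i))) x.1, ?_⟩) ?_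
  · cases i with
    | zero => trivial
    | succ i =>
      intro j
      have h1 := SArtAlg.app_naturality f (g := (SimplexCategory.δ j).op) x.1
      have h2 : ArtAlg.toAlg (A.X.map (SimplexCategory.δ j).op) x.1 = 0 := x.2 j
      show ArtAlg.toAlg (B.X.map (SimplexCategory.δ j).op)
        (SArtAlg.app f (op (SimplexCategory.mk (i + 1))) x.1) = 0
      rw [← h1, h2, map_zero]
  · rintro x y ⟨h, hker, h0⟩
    refine ⟨SArtAlg.app f (op (SimplexCategory.mk (i + 1))) h, fun j => ?_, ?_⟩
    · have h1 := SArtAlg.app_naturality f (g := (SimplexCategory.δ j.succ).op) h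
      have h2 : ArtAlg.toAlg (A.X.map (SimplexCategory.δ j.succ).op) h = 0 := hker j
      show ArtAlg.toAlg (B.X.map (SimplexCategory.δ j.succ).op)
        (SArtAlg.app f (op (SimplexCategory.mk (i + 1))) h) = 0
      rw [← h1, h2, map_zero]
    · have h1 := SArtAlg.app_naturality f
        (g := (SimplexCategory.δ (0 : Fin (i + 2))).op) h
      have h2 : ArtAlg.toAlg (A.X.map (SimplexCategory.δ (0 : Fin (i + 2))).op) h
        = x.1 - y.1 := h0
      show ArtAlg.toAlg (B.X.map (SimplexCategory.δ (0 : Fin (i + 2))).op)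
        (SArtAlg.app f (op (SimplexCategory.mk (i + 1))) h) = _
      rw [← h1, h2, map_sub]

/-- A morphism of `sC_Λ` is acyclic if it induces isomorphisms on all homotopy groups. -/
def SArtAlg.Acyclic {A B : SArtAlg Λ} (f : A ⟶ B) : Prop :=
  ∀ i, Function.Bijective (SArtAlg.piMap f i)

/-- A small extension in `sC_Λ`: a surjection whose kernel `I` satisfies `m(A)·I = 0`. -/
def SArtAlg.SmallExt {A B : SArtAlg Λ} (f : A ⟶ B) : Prop :=
  SArtAlg.Surj f ∧ ∀ m, (IsLocalRing.maximalIdeal (A.X.obj m).carrier) *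
    RingHom.ker (SArtAlg.app f m).toRingHom = ⊥

/-- An acyclic small extension. -/
def SArtAlg.AcySmallExt {A B : SArtAlg Λ} (f : A ⟶ B) : Prop :=
  SArtAlg.SmallExt f ∧ SArtAlg.Acyclic f

/-! ## Set-valued deformation functors and smoothness -/

section SetFunctors

variable {𝒞 : Type*} [Category 𝒞]

/-- The fibre product `F(B) ×_{G(B)} G(A)` together with the assertion that the
canonical map from `F(A)` to it is surjective: every pair
`(b, a) ∈ F(B) × G(A)` with `α_B(b) = G(f)(a)` lifts to some element of `F(A)`. -/
def RelSurj {F G : 𝒞 ⥤ Type} (α : F ⟶ G) {A B : 𝒞} (f : A ⟶ B) : Prop :=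
  ∀ (b : F.obj B) (a : G.obj A), α.app B b = G.map f a →
    ∃ x : F.obj A, F.map f x = b ∧ α.app A x = a

end SetFunctors

/-- A morphism `α : F → G` in `Sp` (left-exact set-valued functors on `C_Λ`) is
smooth if for all surjections `A ↠ B` in `C_Λ` the map
`F(A) → F(B) ×_{G(B)} G(A)` is surjective. -/
def SpSmooth {F G : ArtAlg Λ ⥤ Type} (α : F ⟶ G) : Prop :=
  ∀ {A B : ArtAlg Λ} (f : A ⟶ B), ArtAlg.Surjective f → RelSurj α f

/-- A morphism `α : F → G` in `cSp` (left-exact set-valued functors on `sC_Λ`)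
is smooth if for all small extensions `A ↠ B` in `sC_Λ` the map
`F(A) → F(B) ×_{G(B)} G(A)` is surjective. -/
def CSpSmooth {F G : SArtAlg Λ ⥤ Type} (α : F ⟶ G) : Prop :=
  ∀ {A B : SArtAlg Λ} (f : A ⟶ B), SArtAlg.SmallExt f → RelSurj α f

/-- A morphism `α : F → G` in `cSp` is quasi-smooth if for all acyclic small
extensions `A ↠ B` in `sC_Λ` the map `F(A) → F(B) ×_{G(B)} G(A)` is surjective. -/
def CSpQuasiSmooth {F G : SArtAlg Λ ⥤ Type} (α : F ⟶ G) : Prop :=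
  ∀ {A B : SArtAlg Λ} (f : A ⟶ B), SArtAlg.AcySmallExt f → RelSurj α f

/-- Evaluation `sC_Λ → C_Λ`, `A ↦ A_0`; composition with it is the inclusion
`Sp ↪ cSp`, `F ↦ (A ↦ F(A_0))`. -/
def ev0 : SArtAlg Λ ⥤ ArtAlg Λ where
  obj A := A.X.obj (op (SimplexCategory.mk (0)))
  map f := NatTrans.app f (op (SimplexCategory.mk (0)))

open Simplicial


/-! ### Auxiliary lemmas -/

section AuxLocal

variable {R : Type*} [CommRing R] [IsLocalRing R]

lemma aux_isUnit_add_of_mem_max {a b : R} (ha : IsUnit a)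
    (hb : b ∈ IsLocalRing.maximalIdeal R) : IsUnit (a + b) := by
  by_contra h
  have h1 : a + b ∈ IsLocalRing.maximalIdeal R := h
  have h2 : a ∈ IsLocalRing.maximalIdeal R := by
    have := Ideal.sub_mem _ h1 hb
    simpa using this
  exact h2 ha

lemma aux_mem_max_of_sub_mem {a b : R} (hab : a - b ∈ IsLocalRing.maximalIdeal R)
    (hb : b ∈ IsLocalRing.maximalIdeal R) : a ∈ IsLocalRing.maximalIdeal R := by
  have := Ideal.add_mem _ hab hb
  simpa using this

end AuxLocal

lemma aux_eqvGen_eq {α : Type*} {r : α → α → Prop} (h : ∀ a b, r a b → a = b) {a b : α}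
    (he : Relation.EqvGen r a b) : a = b := by
  induction he with
  | rel x y hxy => exact h _ _ hxy
  | refl => rfl
  | symm x y _ ih => exact ih.symm
  | trans x y z _ _ ih1 ih2 => exact ih1.trans ih2

section RelSurjLemmas

variable {𝒞 : Type*} [Category 𝒞] {F G : 𝒞 ⥤ Type} (α : F ⟶ G)

lemma aux_relSurj_comp {X Y Z : 𝒞} {u : X ⟶ Y} {v : Y ⟶ Z}
    (hu : RelSurj α u) (hv : RelSurj α v) : RelSurj α (u ≫ v) := by
  intro b a hba
  have hba' : α.app Z b = G.map v (G.map u a) := by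
    rw [hba, FunctorToTypes.map_comp_apply]
  obtain ⟨y, hy1, hy2⟩ := hv b (G.map u a) hba'
  obtain ⟨x, hx1, hx2⟩ := hu y a hy2
  refine ⟨x, ?_, hx2⟩
  rw [FunctorToTypes.map_comp_apply, hx1, hy1]

lemma aux_relSurj_of_inverse {X Y : 𝒞} (u : X ⟶ Y) (e : Y ⟶ X)
    (h1 : u ≫ e = 𝟙 X) (h2 : e ≫ u = 𝟙 Y) : RelSurj α u := by
  intro b a hba
  refine ⟨F.map e b, ?_, ?_⟩
  · rw [← FunctorToTypes.map_comp_apply, h2, FunctorToTypes.map_id_apply]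
  · rw [FunctorToTypes.naturality, hba, ← FunctorToTypes.map_comp_apply, h1,
      FunctorToTypes.map_id_apply]

end RelSurjLemmas

/-! ### Quotient objects in `C_Λ` -/

section QuotArt

variable {Λ : Type} [CommRing Λ] [IsLocalRing Λ] [IsNoetherianRing Λ]
  [IsAdicComplete (IsLocalRing.maximalIdeal Λ) Λ]

variable (A : ArtAlg Λ) (J : Ideal A.carrier)
  (hJ : J ≤ IsLocalRing.maximalIdeal A.carrier)

include hJ in
lemma aux_quot_isUnit {x : A.carrier} (h : IsUnit (Ideal.Quotient.mk J x)) : IsUnit x := by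
  obtain ⟨b, hb⟩ := IsUnit.exists_right_inv h
  obtain ⟨c, rfl⟩ := Ideal.Quotient.mk_surjective b
  have : x * c - 1 ∈ J := by
    rw [← Ideal.Quotient.eq]
    simpa using hb
  have hu : IsUnit (1 + (x * c - 1)) := aux_isUnit_add_of_mem_max isUnit_one (hJ this)
  have : (1 : A.carrier) + (x * c - 1) = x * c := by ring
  rw [this] at hu
  exact isUnit_of_mul_isUnit_left hu

include hJ in
lemma aux_quot_ne_top : J ≠ ⊤ := fun h => by
  have := hJ (h ▸ Submodule.mem_top (x := (1 : A.carrier)))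
  exact this isUnit_one

/-- The quotient of an object of `C_Λ` by an ideal contained in the maximal ideal. -/
def ArtAlg.quotArt : ArtAlg Λ := by
  have hnt : Nontrivial (A.carrier ⧸ J) := Ideal.Quotient.nontrivial_iff.mpr (aux_quot_ne_top A J hJ)
  have hloc : IsLocalRing (A.carrier ⧸ J) :=
    IsLocalRing.of_surjective' (Ideal.Quotient.mk J) Ideal.Quotient.mk_surjective
  have hlocmk : IsLocalHom (Ideal.Quotient.mk J) := by
    constructor
    intro x h
    exact aux_quot_isUnit A J hJ h
  have hlochom : IsLocalHom (algebraMap Λ (A.carrier ⧸ J)) := by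
    constructor
    intro x h
    have h2 : IsUnit (Ideal.Quotient.mk J (algebraMap Λ A.carrier x)) := h
    exact IsUnit.of_map _ x (aux_quot_isUnit A J hJ h2)
  refine { carrier := A.carrier ⧸ J, residue_bij := ?_ }
  constructor
  · exact (IsLocalRing.ResidueField.map (algebraMap Λ (A.carrier ⧸ J))).injective
  · intro y
    obtain ⟨q, rfl⟩ := IsLocalRing.residue_surjective (R := A.carrier ⧸ J) y
    obtain ⟨a, rfl⟩ := Ideal.Quotient.mk_surjective q
    obtain ⟨t, ht⟩ := A.residue_bij.2 (IsLocalRing.residue A.carrier a)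
    obtain ⟨l, rfl⟩ := IsLocalRing.residue_surjective t
    have hdiff : algebraMap Λ A.carrier l - a ∈ IsLocalRing.maximalIdeal A.carrier := by
      rw [IsLocalRing.ResidueField.map_residue] at ht
      exact Ideal.Quotient.eq.mp ht
    refine ⟨IsLocalRing.residue Λ l, ?_⟩
    rw [IsLocalRing.ResidueField.map_residue]
    apply Ideal.Quotient.eq.mpr
    have heq : algebraMap Λ (A.carrier ⧸ J) l - Ideal.Quotient.mk J a =
        Ideal.Quotient.mk J (algebraMap Λ A.carrier l - a) := by
      rw [map_sub]; rfl
    rw [heq]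
    exact fun hu => hdiff (aux_quot_isUnit A J hJ hu)


/-- The quotient map as a morphism of `C_Λ`. -/
def ArtAlg.quotMk : A ⟶ ArtAlg.quotArt A J hJ := Ideal.Quotient.mkₐ Λ J

/-- The induced map from a quotient. -/
def ArtAlg.quotLift (B : ArtAlg Λ) (f : A ⟶ B) (h : ∀ a ∈ J, ArtAlg.toAlg f a = 0) :
    ArtAlg.quotArt A J hJ ⟶ B := Ideal.Quotient.liftₐ J (ArtAlg.toAlg f) h

lemma ArtAlg.quotMk_comp_quotLift (B : ArtAlg Λ) (f : A ⟶ B)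
    (h : ∀ a ∈ J, ArtAlg.toAlg f a = 0) :
    ArtAlg.quotMk A J hJ ≫ ArtAlg.quotLift A J hJ B f h = f := by
  show (Ideal.Quotient.liftₐ J (ArtAlg.toAlg f) h).comp (Ideal.Quotient.mkₐ Λ J) = _
  ext a
  rfl

end QuotArt

/-! ### The Čech nerve of a small extension in `C_Λ` -/

section Nerve

set_option linter.unusedSectionVars false
set_option synthInstance.maxHeartbeats 1000000
set_option maxHeartbeats 1600000

variable {Λ : Type} [CommRing Λ] [IsLocalRing Λ] [IsNoetherianRing Λ]
  [IsAdicComplete (IsLocalRing.maximalIdeal Λ) Λ]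

variable (A B : ArtAlg Λ) (f : A ⟶ B)

/-- The `k`-simplices of the Čech nerve of `f`, as a subalgebra of `A^{k+1}`. -/
def nerveSub (k : ℕ) : Subalgebra A.carrier (Fin (k + 1) → A.carrier) where
  carrier := {v | ∀ i, ArtAlg.toAlg f (v i) = ArtAlg.toAlg f (v 0)}
  mul_mem' := by
    intro a b ha hb i
    show ArtAlg.toAlg f (a i * b i) = ArtAlg.toAlg f (a 0 * b 0)
    rw [map_mul, map_mul, ha i, hb i]
  add_mem' := by
    intro a b ha hb i
    show ArtAlg.toAlg f (a i + b i) = ArtAlg.toAlg f (a 0 + b 0)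
    rw [map_add, map_add, ha i, hb i]
  one_mem' := fun _ => rfl
  zero_mem' := fun _ => rfl
  algebraMap_mem' := fun _ _ => rfl

/-- The carrier of the `k`-simplices of the Čech nerve. -/
abbrev nerveCar (k : ℕ) : Type := ↥(nerveSub A B f k)

lemma nerve_ker_le_max {x : A.carrier} (hx : ArtAlg.toAlg f x = 0) :
    x ∈ IsLocalRing.maximalIdeal A.carrier := by
  rw [IsLocalRing.mem_maximalIdeal, mem_nonunits_iff]
  intro hu
  exact not_isUnit_zero (hx ▸ hu.map (ArtAlg.toAlg f))

lemma nerve_sub_mem_ker (k : ℕ) (v : nerveCar A B f k) (i : Fin (k + 1)) :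
    ArtAlg.toAlg f (v.1 i - v.1 0) = 0 := by
  rw [map_sub, v.2 i, sub_self]

lemma nerve_isUnit_iff (k : ℕ) (v : nerveCar A B f k) :
    IsUnit v ↔ IsUnit (v.1 0) := by
  constructor
  · intro h
    obtain ⟨w, hw⟩ := h.exists_right_inv
    exact IsUnit.of_mul_eq_one (w.1 0) (congrFun (congrArg Subtype.val hw) 0)
  · intro h0
    have hall : ∀ i, IsUnit (v.1 i) := by
      intro i
      have hmem : v.1 i - v.1 0 ∈ IsLocalRing.maximalIdeal A.carrier :=
        nerve_ker_le_max A B f (nerve_sub_mem_ker A B f k v i)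
      have := aux_isUnit_add_of_mem_max h0 hmem
      simpa using this
    choose u hu using hall
    have hfu : ∀ i, ArtAlg.toAlg f ((u i : A.carrier)) = ArtAlg.toAlg f ((u 0 : A.carrier)) := by
      intro i
      rw [hu i, hu 0]
      exact v.2 i
    refine IsUnit.of_mul_eq_one (a := v) ⟨fun i => ((u i)⁻¹ : Units A.carrier), ?_⟩ ?_
    · intro i
      show ArtAlg.toAlg f ((u i)⁻¹ : Units A.carrier) = ArtAlg.toAlg f ((u 0)⁻¹ : Units A.carrier)
      have hac : ArtAlg.toAlg f (u i : A.carrier) *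
          ArtAlg.toAlg f ((u 0)⁻¹ : Units A.carrier) = 1 := by
        rw [hfu i, ← map_mul]
        simp
      have hba : ArtAlg.toAlg f ((u i)⁻¹ : Units A.carrier) *
          ArtAlg.toAlg f (u i : A.carrier) = 1 := by
        rw [← map_mul]
        simp
      calc ArtAlg.toAlg f ((u i)⁻¹ : Units A.carrier)
          = ArtAlg.toAlg f ((u i)⁻¹ : Units A.carrier) *
            (ArtAlg.toAlg f (u i : A.carrier) *
              ArtAlg.toAlg f ((u 0)⁻¹ : Units A.carrier)) := by rw [hac, mul_one]
        _ = (ArtAlg.toAlg f ((u i)⁻¹ : Units A.carrier) *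
              ArtAlg.toAlg f (u i : A.carrier)) *
            ArtAlg.toAlg f ((u 0)⁻¹ : Units A.carrier) := by ring
        _ = ArtAlg.toAlg f ((u 0)⁻¹ : Units A.carrier) := by rw [hba, one_mul]
    · refine Subtype.ext (funext fun i => ?_)
      show v.1 i * ((u i)⁻¹ : Units A.carrier) = 1
      rw [← hu i]
      simp

instance nerve_nontrivial (k : ℕ) : Nontrivial (nerveCar A B f k) :=
  ⟨0, 1, fun h => zero_ne_one (congrFun (congrArg Subtype.val h) 0)⟩

instance nerve_isLocalRing (k : ℕ) : IsLocalRing (nerveCar A B f k) := by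
  apply IsLocalRing.of_nonunits_add
  intro a b ha hb
  rw [mem_nonunits_iff] at ha hb ⊢
  rw [nerve_isUnit_iff] at ha hb ⊢
  rw [← mem_nonunits_iff, ← IsLocalRing.mem_maximalIdeal] at ha hb ⊢
  exact Ideal.add_mem _ ha hb

lemma nerve_mem_max_iff (k : ℕ) (v : nerveCar A B f k) :
    v ∈ IsLocalRing.maximalIdeal (nerveCar A B f k) ↔
      v.1 0 ∈ IsLocalRing.maximalIdeal A.carrier := by
  rw [IsLocalRing.mem_maximalIdeal, mem_nonunits_iff, IsLocalRing.mem_maximalIdeal,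
    mem_nonunits_iff]
  exact not_congr (nerve_isUnit_iff A B f k v)

lemma nerve_mem_max_all (k : ℕ) (v : nerveCar A B f k)
    (hv : v ∈ IsLocalRing.maximalIdeal (nerveCar A B f k)) (i : Fin (k + 1)) :
    v.1 i ∈ IsLocalRing.maximalIdeal A.carrier := by
  have h0 := (nerve_mem_max_iff A B f k v).mp hv
  have hsub : v.1 i - v.1 0 ∈ IsLocalRing.maximalIdeal A.carrier :=
    nerve_ker_le_max A B f (nerve_sub_mem_ker A B f k v i)
  exact aux_mem_max_of_sub_mem hsub h0

instance nerve_artinian (k : ℕ) : IsArtinianRing (nerveCar A B f k) := by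
  have h2 : IsArtinian A.carrier (nerveCar A B f k) :=
    isArtinian_of_submodule_of_artinian _ _ (Subalgebra.toSubmodule (nerveSub A B f k))
      inferInstance
  exact isArtinian_of_tower A.carrier h2

/-- Evaluation at the `i`-th coordinate. -/
def nerveEv (k : ℕ) (i : Fin (k + 1)) : nerveCar A B f k →ₐ[Λ] A.carrier where
  toFun v := v.1 i
  map_one' := rfl
  map_mul' _ _ := rfl
  map_zero' := rfl
  map_add' _ _ := rfl
  commutes' _ := rfl

/-- The diagonal map. -/
def nerveDiag (k : ℕ) : A.carrier →ₐ[Λ] nerveCar A B f k where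
  toFun a := ⟨fun _ => a, fun _ => rfl⟩
  map_one' := rfl
  map_mul' _ _ := rfl
  map_zero' := rfl
  map_add' _ _ := rfl
  commutes' _ := rfl

/-- The `k`-simplices of the Čech nerve as an object of `C_Λ`. -/
def nerveObj (k : ℕ) : ArtAlg Λ := by
  have hlochom : IsLocalHom (algebraMap Λ (nerveCar A B f k)) := by
    constructor
    intro x h
    rw [nerve_isUnit_iff] at h
    exact (A.localHom).1 x h
  refine { carrier := nerveCar A B f k, residue_bij := ?_ }
  constructor
  · exact (IsLocalRing.ResidueField.map (algebraMap Λ (nerveCar A B f k))).injective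
  · intro y
    obtain ⟨s, rfl⟩ := IsLocalRing.residue_surjective y
    obtain ⟨t, ht⟩ := A.residue_bij.2 (IsLocalRing.residue A.carrier (s.1 0))
    obtain ⟨l, rfl⟩ := IsLocalRing.residue_surjective t
    rw [IsLocalRing.ResidueField.map_residue] at ht
    have hd : algebraMap Λ A.carrier l - s.1 0 ∈ IsLocalRing.maximalIdeal A.carrier :=
      Ideal.Quotient.eq.mp ht
    refine ⟨IsLocalRing.residue Λ l, ?_⟩
    rw [IsLocalRing.ResidueField.map_residue]
    apply Ideal.Quotient.eq.mpr
    apply (nerve_mem_max_iff A B f k _).mpr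
    show algebraMap Λ A.carrier l - s.1 0 ∈ IsLocalRing.maximalIdeal A.carrier
    exact hd

/-- The structure maps of the Čech nerve. -/
def nerveMapHom {k l : ℕ} (g : Fin (l + 1) → Fin (k + 1)) :
    nerveObj A B f k ⟶ nerveObj A B f l where
  toFun v := ⟨fun i => v.1 (g i), fun i => by rw [v.2 (g i), v.2 (g 0)]⟩
  map_one' := rfl
  map_mul' _ _ := rfl
  map_zero' := rfl
  map_add' _ _ := rfl
  commutes' _ := rfl

/-- The Čech nerve as a simplicial object of `C_Λ`. -/
def nerveX : SimplicialObject (ArtAlg Λ) where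
  obj m := nerveObj A B f m.unop.len
  map φ := nerveMapHom A B f (fun i => φ.unop.toOrderHom i)
  map_id m := rfl
  map_comp φ ψ := rfl

lemma nerve_δ_coord {n : ℕ} (j : Fin (n + 2)) (v : ((nerveX A B f).obj (op ⦋n + 1⦌)).carrier)
    (l : Fin (n + 1)) :
    (ArtAlg.toAlg ((nerveX A B f).δ j) v).1 l = v.1 (Fin.succAbove j l) := rfl

end Nerve

/-! ### The simplicial objects and the acyclic small extension -/

section NerveTwo

set_option linter.unusedSectionVars false
set_option synthInstance.maxHeartbeats 1000000
set_option maxHeartbeats 1600000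

variable {Λ : Type} [CommRing Λ] [IsLocalRing Λ] [IsNoetherianRing Λ]
  [IsAdicComplete (IsLocalRing.maximalIdeal Λ) Λ]

lemma aux_artin_nilpotent (C : ArtAlg Λ) :
    ∃ n > 0, (IsLocalRing.maximalIdeal C.carrier) ^ n = ⊥ := by
  obtain ⟨n, hn⟩ := IsArtinianRing.isNilpotent_jacobson_bot (R := C.carrier)
  rw [IsLocalRing.jacobson_eq_maximalIdeal ⊥ bot_ne_top] at hn
  refine ⟨n + 1, Nat.succ_pos n, ?_⟩
  rw [pow_succ, hn]
  simp

/-- The constant simplicial object on `B` as an object of `sC_Λ`. -/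
def constSArt (B : ArtAlg Λ) : SArtAlg Λ where
  X := (Functor.const _).obj B
  nilpotent := by
    obtain ⟨n, hn, h⟩ := aux_artin_nilpotent B
    exact ⟨n, hn, fun _ => h⟩
  cotFinite := by
    refine ⟨1, fun n hn => ?_⟩
    match n, hn with
    | (k + 1), _ =>
      intro x hx h
      exact h 0

variable (A B : ArtAlg Λ) (f : A ⟶ B)

lemma nerve_max_pow (k n : ℕ) (h : (IsLocalRing.maximalIdeal A.carrier) ^ n = ⊥) :
    (IsLocalRing.maximalIdeal (nerveCar A B f k)) ^ n = ⊥ := by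
  rw [eq_bot_iff]
  intro x hx
  rw [Ideal.mem_bot]
  refine Subtype.ext (funext fun i => ?_)
  have hle : Ideal.map (nerveEv A B f k i) (IsLocalRing.maximalIdeal (nerveCar A B f k)) ≤
      IsLocalRing.maximalIdeal A.carrier := by
    rw [Ideal.map_le_iff_le_comap]
    intro v hv
    exact nerve_mem_max_all A B f k v hv i
  have h1 : Ideal.map (nerveEv A B f k i)
      ((IsLocalRing.maximalIdeal (nerveCar A B f k)) ^ n) ≤ ⊥ := by
    rw [Ideal.map_pow]
    exact le_trans (Ideal.pow_right_mono hle n) (le_of_eq h)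
  have := h1 (Ideal.mem_map_of_mem _ hx)
  exact (Ideal.mem_bot).mp this

variable (hsm : IsLocalRing.maximalIdeal A.carrier *
    RingHom.ker (ArtAlg.toAlg f).toRingHom = ⊥)

include hsm in
lemma aux_mulker {a b : A.carrier} (ha : a ∈ IsLocalRing.maximalIdeal A.carrier)
    (hb : ArtAlg.toAlg f b = 0) : a * b = 0 := by
  have : a * b ∈ IsLocalRing.maximalIdeal A.carrier *
      RingHom.ker (ArtAlg.toAlg f).toRingHom :=
    Ideal.mul_mem_mul ha (RingHom.mem_ker.mpr hb)
  rw [hsm] at this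
  simpa using this

lemma aux_cotDenom_le_max (C : ArtAlg Λ) :
    cotDenom Λ C ≤ IsLocalRing.maximalIdeal C.carrier := by
  apply sup_le
  · exact Ideal.pow_le_self two_ne_zero
  · exact Ideal.mul_le_right

/-- The ideal of constant tuples with value in `cotDenom Λ A`. -/
def nerveT (k : ℕ) : Ideal (nerveCar A B f k) where
  carrier := {v | (∀ i, v.1 i = v.1 0) ∧ v.1 0 ∈ cotDenom Λ A}
  add_mem' := by
    rintro a b ⟨ha1, ha2⟩ ⟨hb1, hb2⟩
    constructor
    · intro i
      show a.1 i + b.1 i = a.1 0 + b.1 0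
      rw [ha1 i, hb1 i]
    · exact Ideal.add_mem _ ha2 hb2
  zero_mem' := ⟨fun _ => rfl, Ideal.zero_mem _⟩
  smul_mem' := by
    rintro c x ⟨hx1, hx2⟩
    have hx0max : x.1 0 ∈ IsLocalRing.maximalIdeal A.carrier :=
      aux_cotDenom_le_max A hx2
    constructor
    · intro i
      show c.1 i * x.1 i = c.1 0 * x.1 0
      rw [hx1 i]
      have : (c.1 i - c.1 0) * x.1 0 = 0 := by
        rw [mul_comm]
        exact aux_mulker A B f hsm hx0max (nerve_sub_mem_ker A B f k c i)
      have hexp : c.1 i * x.1 0 = c.1 0 * x.1 0 + (c.1 i - c.1 0) * x.1 0 := by ring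
      rw [hexp, this, add_zero]
    · exact Ideal.mul_mem_left _ _ hx2

include hsm in
lemma nerve_cot_le_T (k : ℕ) :
    cotDenom Λ (nerveObj A B f k) ≤ nerveT A B f hsm k := by
  apply sup_le
  · rw [pow_two]
    apply Ideal.mul_le.mpr
    intro r hr s hs
    have key : ∀ i, r.1 i * s.1 i = r.1 0 * s.1 0 := by
      intro i
      have h1 : r.1 i * (s.1 i - s.1 0) = 0 :=
        aux_mulker A B f hsm (nerve_mem_max_all A B f k r hr i)
          (nerve_sub_mem_ker A B f k s i)
      have h2 : (r.1 i - r.1 0) * s.1 0 = 0 := by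
        rw [mul_comm]
        exact aux_mulker A B f hsm (nerve_mem_max_all A B f k s hs 0)
          (nerve_sub_mem_ker A B f k r i)
      have : r.1 i * s.1 i = r.1 0 * s.1 0 + r.1 i * (s.1 i - s.1 0) +
          (r.1 i - r.1 0) * s.1 0 := by ring
      rw [this, h1, h2, add_zero, add_zero]
    constructor
    · intro i
      show r.1 i * s.1 i = r.1 0 * s.1 0
      exact key i
    · show r.1 0 * s.1 0 ∈ cotDenom Λ A
      apply Ideal.mem_sup_left
      rw [pow_two]
      exact Ideal.mul_mem_mul ((nerve_mem_max_iff A B f k r).mp hr)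
        ((nerve_mem_max_iff A B f k s).mp hs)
  · apply Ideal.mul_le.mpr
    intro r hr s hs
    have : (IsLocalRing.maximalIdeal Λ).map (algebraMap Λ (nerveCar A B f k)) ≤
        (nerveT A B f hsm k).colon (Ideal.span ({s} : Set (nerveCar A B f k)) : Set (nerveCar A B f k)) := by
      rw [Ideal.map_le_iff_le_comap]
      intro l hl
      rw [Ideal.mem_comap]
      refine Ideal.mem_colon_span_singleton.mpr ?_
      have haml : algebraMap Λ A.carrier l ∈ IsLocalRing.maximalIdeal A.carrier := by
        rw [IsLocalRing.mem_maximalIdeal, mem_nonunits_iff]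
        intro hu
        have := (A.localHom).1 l hu
        exact hl this
      constructor
      · intro i
        show algebraMap Λ A.carrier l * s.1 i = algebraMap Λ A.carrier l * s.1 0
        have h0 : algebraMap Λ A.carrier l * (s.1 i - s.1 0) = 0 :=
          aux_mulker A B f hsm haml (nerve_sub_mem_ker A B f k s i)
        have : algebraMap Λ A.carrier l * s.1 i =
            algebraMap Λ A.carrier l * s.1 0 +
              algebraMap Λ A.carrier l * (s.1 i - s.1 0) := by ring
        rw [this, h0, add_zero]
      · show algebraMap Λ A.carrier l * s.1 0 ∈ cotDenom Λ A
        apply Ideal.mem_sup_right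
        exact Ideal.mul_mem_mul (Ideal.mem_map_of_mem _ hl)
          ((nerve_mem_max_iff A B f k s).mp hs)
    have hrs := this hr
    replace hrs := Ideal.mem_colon_span_singleton.mp hrs
    exact hrs

lemma nerve_diag_max (k : ℕ) :
    Ideal.map (nerveDiag A B f k : A.carrier →+* nerveCar A B f k)
      (IsLocalRing.maximalIdeal A.carrier) ≤
        IsLocalRing.maximalIdeal (nerveCar A B f k) := by
  rw [Ideal.map_le_iff_le_comap]
  intro a ha
  rw [Ideal.mem_comap]
  exact (nerve_mem_max_iff A B f k _).mpr ha

lemma nerve_diag_cot (k : ℕ) {a : A.carrier} (ha : a ∈ cotDenom Λ A) :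
    nerveDiag A B f k a ∈ cotDenom Λ (nerveObj A B f k) := by
  obtain ⟨y, hy, z, hz, rfl⟩ := Submodule.mem_sup.mp ha
  rw [map_add]
  show nerveDiag A B f k y + nerveDiag A B f k z ∈
    (IsLocalRing.maximalIdeal (nerveCar A B f k)) ^ 2 ⊔
      ((IsLocalRing.maximalIdeal Λ).map (algebraMap Λ (nerveCar A B f k)) *
        IsLocalRing.maximalIdeal (nerveCar A B f k))
  apply Submodule.add_mem_sup
  · have : nerveDiag A B f k y ∈ Ideal.map (nerveDiag A B f k : A.carrier →+* _)
        ((IsLocalRing.maximalIdeal A.carrier) ^ 2) := Ideal.mem_map_of_mem _ hy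
    rw [Ideal.map_pow] at this
    exact Ideal.pow_right_mono (nerve_diag_max A B f k) 2 this
  · have hmem : nerveDiag A B f k z ∈ Ideal.map (nerveDiag A B f k : A.carrier →+* _)
        ((IsLocalRing.maximalIdeal Λ).map (algebraMap Λ A.carrier) *
          IsLocalRing.maximalIdeal A.carrier) := Ideal.mem_map_of_mem _ hz
    rw [Ideal.map_mul, Ideal.map_map] at hmem
    rw [AlgHom.comp_algebraMap] at hmem
    have hle : (IsLocalRing.maximalIdeal Λ).map (algebraMap Λ (nerveCar A B f k)) *
        Ideal.map (nerveDiag A B f k : A.carrier →+* _)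
          (IsLocalRing.maximalIdeal A.carrier) ≤
        (IsLocalRing.maximalIdeal Λ).map (algebraMap Λ (nerveCar A B f k)) *
          IsLocalRing.maximalIdeal (nerveCar A B f k) :=
      Ideal.mul_mono (le_refl _) (nerve_diag_max A B f k)
    exact hle hmem

end NerveTwo

section NerveThree

set_option linter.unusedSectionVars false
set_option synthInstance.maxHeartbeats 1000000
set_option maxHeartbeats 1600000

variable {Λ : Type} [CommRing Λ] [IsLocalRing Λ] [IsNoetherianRing Λ]
  [IsAdicComplete (IsLocalRing.maximalIdeal Λ) Λ]

variable (A B : ArtAlg Λ) (f : A ⟶ B)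
variable (hsm : IsLocalRing.maximalIdeal A.carrier *
    RingHom.ker (ArtAlg.toAlg f).toRingHom = ⊥)

include hsm in
lemma nerve_normcot (n : ℕ) (hn : 1 ≤ n) : NormCotVanish Λ (nerveX A B f) (n + 1) := by
  intro x hx hall
  set j₁ : Fin (n + 2) := (0 : Fin (n + 1)).succ with hj₁
  set j₂ : Fin (n + 2) := (Fin.last n).succ with hj₂
  have hT1 := nerve_cot_le_T A B f hsm n (hall 0)
  have hT2 := nerve_cot_le_T A B f hsm n (hall (Fin.last n))
  have hkey1 : ∀ c : Fin (n + 2), c ≠ j₁ →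
      x.1 c = x.1 (Fin.succAbove j₁ (0 : Fin (n + 1))) := by
    intro c hc
    obtain ⟨l, hl⟩ := Fin.exists_succAbove_eq hc
    rw [← hl]
    exact hT1.1 l
  have hkey2 : ∀ c : Fin (n + 2), c ≠ j₂ →
      x.1 c = x.1 (Fin.succAbove j₂ (0 : Fin (n + 1))) := by
    intro c hc
    obtain ⟨l, hl⟩ := Fin.exists_succAbove_eq hc
    rw [← hl]
    exact hT2.1 l
  have hne : j₁ ≠ j₂ := by
    intro h
    have := congrArg Fin.val h
    simp [hj₁, hj₂, Fin.val_succ] at this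
    omega
  have h0j1 : (0 : Fin (n + 2)) ≠ j₁ := (Fin.succ_ne_zero _).symm
  have hsa1 : Fin.succAbove j₂ (0 : Fin (n + 1)) = 0 :=
    Fin.succAbove_ne_zero_zero (Fin.succ_ne_zero _)
  have hx0 : x.1 0 = x.1 (Fin.succAbove j₁ (0 : Fin (n + 1))) := hkey1 0 h0j1
  have hall' : ∀ c, x.1 c = x.1 0 := by
    intro c
    by_cases hc : c = j₁
    · rw [hc]
      have e1 : x.1 j₁ = x.1 (Fin.succAbove j₂ (0 : Fin (n + 1))) := hkey2 j₁ hne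
      rw [e1, hsa1]
    · exact (hkey1 c hc).trans hx0.symm
  have hw : x.1 0 ∈ cotDenom Λ A := by
    rw [hx0]
    exact hT1.2
  have hxdiag : x = nerveDiag A B f (n + 1) (x.1 0) :=
    Subtype.ext (funext fun c => hall' c)
  rw [hxdiag]
  exact nerve_diag_cot A B f (n + 1) hw

/-- The Čech nerve of a small extension as an object of `sC_Λ`. -/
def nerveSArt : SArtAlg Λ where
  X := nerveX A B f
  nilpotent := by
    obtain ⟨n, hn, h⟩ := aux_artin_nilpotent A
    exact ⟨n, hn, fun m => nerve_max_pow A B f m.unop.len n h⟩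
  cotFinite := by
    refine ⟨2, fun n hn => ?_⟩
    obtain ⟨m, rfl⟩ : ∃ m, n = m + 1 := ⟨n - 1, by omega⟩
    exact nerve_normcot A B f hsm m (by omega)

/-- The augmentation from the Čech nerve to the constant simplicial object. -/
def nerveEps : nerveSArt A B f hsm ⟶ constSArt B where
  app m := ((ArtAlg.toAlg f).comp (nerveEv A B f m.unop.len 0) :
    nerveObj A B f m.unop.len ⟶ B)
  naturality := by
    intro m m' φ
    exact AlgHom.ext fun v => v.2 (φ.unop.toOrderHom 0)

lemma nerve_smallExt (hf : ArtAlg.Surjective f) : SArtAlg.SmallExt (nerveEps A B f hsm) := by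
  constructor
  · intro m b
    obtain ⟨a, ha⟩ := hf b
    exact ⟨nerveDiag A B f _ a, ha⟩
  · intro m
    rw [eq_bot_iff]
    refine Ideal.mul_le.mpr fun r hr s hs => ?_
    have hs' : ∀ i, ArtAlg.toAlg f (s.1 i) = 0 := by
      intro i
      rw [s.2 i]
      exact RingHom.mem_ker.mp hs
    rw [Ideal.mem_bot]
    refine Subtype.ext (funext fun i => ?_)
    exact aux_mulker A B f hsm (nerve_mem_max_all A B f _ r hr i) (hs' i)

lemma const_moore_eq (B : ArtAlg Λ) (i : ℕ) :
    ∀ a b, (constSArt B).mooreRel i a b → a = b := by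
  rintro a b ⟨h, hker, h0⟩
  have hz : h = 0 := hker 0
  have h0' : h = a.1 - b.1 := h0
  exact Subtype.ext (sub_eq_zero.mp (h0'.symm.trans hz))

lemma const_cycle_val (B : ArtAlg Λ) (i : ℕ)
    (x : {z : ((constSArt B).X.obj (op ⦋i + 1⦌)).carrier // (constSArt B).isCycle (i + 1) z}) :
    x.1 = 0 := x.2 0

lemma nerve_cycle_val (i : ℕ)
    (x : {z : ((nerveSArt A B f hsm).X.obj (op ⦋i + 1⦌)).carrier //
      (nerveSArt A B f hsm).isCycle (i + 1) z}) : x.1 = 0 := by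
  apply Subtype.ext
  funext c
  by_cases hc : c = 0
  · obtain ⟨l, hl⟩ := Fin.exists_succAbove_eq
      (show c ≠ Fin.succ (0 : Fin (i + 1)) from by rw [hc]; exact (Fin.succ_ne_zero _).symm)
    have h2 : x.1.1 (Fin.succAbove (Fin.succ (0 : Fin (i + 1))) l) = 0 :=
      congrFun (congrArg Subtype.val (x.2 (Fin.succ (0 : Fin (i + 1))))) l
    rw [hl] at h2
    exact h2
  · obtain ⟨l, hl⟩ := Fin.exists_succAbove_eq (show c ≠ (0 : Fin (i + 2)) from hc)
    have h2 : x.1.1 (Fin.succAbove (0 : Fin (i + 2)) l) = 0 :=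
      congrFun (congrArg Subtype.val (x.2 (0 : Fin (i + 2)))) l
    rw [hl] at h2
    exact h2

lemma nerve_acyclic (hf : ArtAlg.Surjective f) : SArtAlg.Acyclic (nerveEps A B f hsm) := by
  intro i
  cases i with
  | zero =>
    constructor
    · intro q1 q2 h
      obtain ⟨u, rfl⟩ := Quot.exists_rep q1
      obtain ⟨v, rfl⟩ := Quot.exists_rep q2
      have h' := Quot.eq.mp h
      have heq := aux_eqvGen_eq (const_moore_eq B 0) h'
      have hval : ArtAlg.toAlg f (u.1.1 0) = ArtAlg.toAlg f (v.1.1 0) :=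
        congrArg Subtype.val heq
      apply Quot.sound
      refine ⟨⟨fun j => if j = 0 then 0 else u.1.1 0 - v.1.1 0, ?_⟩, ?_, ?_⟩
      · intro j
        show ArtAlg.toAlg f (if j = 0 then _ else _) =
          ArtAlg.toAlg f (if (0 : Fin 2) = 0 then (0 : A.carrier) else _)
        by_cases hj : j = 0
        · rw [if_pos hj, if_pos rfl]
        · rw [if_neg hj, if_pos rfl, map_zero, map_sub, hval, sub_self]
      · intro j
        have hj : j = 0 := by
          apply Fin.ext
          rw [Fin.val_zero]
          have hb : j.val < 1 := j.isLt
          omega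
        subst hj
        apply Subtype.ext
        funext l
        have hl : l = 0 := by
          apply Fin.ext
          rw [Fin.val_zero]
          have hb : l.val < 1 := l.isLt
          omega
        subst hl
        show (if Fin.succAbove (Fin.succ (0 : Fin 1)) (0 : Fin 1) = 0 then (0 : A.carrier)
          else u.1.1 0 - v.1.1 0) = 0
        rw [if_pos (by decide)]
      · apply Subtype.ext
        funext l
        have hl : l = 0 := by
          apply Fin.ext
          rw [Fin.val_zero]
          have hb : l.val < 1 := l.isLt
          omega
        subst hl
        show (if Fin.succAbove (0 : Fin 2) (0 : Fin 1) = 0 then (0 : A.carrier)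
          else u.1.1 0 - v.1.1 0) = u.1.1 0 - v.1.1 0
        rw [if_neg (by decide)]
    · intro q
      obtain ⟨b, rfl⟩ := Quot.exists_rep q
      obtain ⟨a, ha⟩ := hf b.1
      exact ⟨Quot.mk _ ⟨nerveDiag A B f 0 a, trivial⟩, congrArg (Quot.mk _) (Subtype.ext ha)⟩
  | succ i =>
    constructor
    · intro q1 q2 _
      obtain ⟨u, rfl⟩ := Quot.exists_rep q1
      obtain ⟨v, rfl⟩ := Quot.exists_rep q2
      apply congrArg (Quot.mk _)
      apply Subtype.ext
      rw [nerve_cycle_val A B f hsm i u, nerve_cycle_val A B f hsm i v]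
    · intro q
      obtain ⟨y, rfl⟩ := Quot.exists_rep q
      refine ⟨Quot.mk _ ⟨0, fun j => map_zero _⟩, ?_⟩
      apply congrArg (Quot.mk _)
      apply Subtype.ext
      show SArtAlg.app (nerveEps A B f hsm) _ 0 = y.1
      rw [const_cycle_val B i y]
      exact map_zero _

end NerveThree

/-! ### Assembly -/

section Assembly

set_option linter.unusedSectionVars false
set_option synthInstance.maxHeartbeats 1000000
set_option maxHeartbeats 1600000

variable {Λ : Type} [CommRing Λ] [IsLocalRing Λ] [IsNoetherianRing Λ]
  [IsAdicComplete (IsLocalRing.maximalIdeal Λ) Λ]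

variable {F G : ArtAlg Λ ⥤ Type} (α : F ⟶ G)

lemma aux_relSurj_of_small (hq : CSpQuasiSmooth (Functor.whiskerLeft ev0 α)) {A B : ArtAlg Λ}
    (f : A ⟶ B) (hf : ArtAlg.Surjective f)
    (hsm : IsLocalRing.maximalIdeal A.carrier *
      RingHom.ker (ArtAlg.toAlg f).toRingHom = ⊥) : RelSurj α f := by
  have hrel : RelSurj (Functor.whiskerLeft ev0 α) (nerveEps A B f hsm) :=
    hq _ ⟨nerve_smallExt A B f hsm hf, nerve_acyclic A B f hsm hf⟩
  have hrel' : RelSurj α (ev0.map (nerveEps A B f hsm)) := hrel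
  have hcomp : (show A ⟶ nerveObj A B f 0 from nerveDiag A B f 0) ≫
      ev0.map (nerveEps A B f hsm) = f := AlgHom.ext fun a => rfl
  have hinv1 : (show A ⟶ nerveObj A B f 0 from nerveDiag A B f 0) ≫
      (show nerveObj A B f 0 ⟶ A from nerveEv A B f 0 0) = 𝟙 A := by
    apply AlgHom.ext
    intro a
    rfl
  have hinv2 : (show nerveObj A B f 0 ⟶ A from nerveEv A B f 0 0) ≫
      (show A ⟶ nerveObj A B f 0 from nerveDiag A B f 0) = 𝟙 (nerveObj A B f 0) :=
    AlgHom.ext fun v => Subtype.ext (funext fun i => by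
      have hi : i = 0 := by
        apply Fin.ext
        rw [Fin.val_zero]
        have hb : i.val < 1 := i.isLt
        omega
      rw [hi]
      rfl)
  rw [← hcomp]
  exact aux_relSurj_comp α (aux_relSurj_of_inverse α _ _ hinv1 hinv2) hrel'

lemma aux_relSurj_of_surj (hq : CSpQuasiSmooth (Functor.whiskerLeft ev0 α)) :
    ∀ (n : ℕ) {A B : ArtAlg Λ} (f : A ⟶ B), ArtAlg.Surjective f →
      (IsLocalRing.maximalIdeal A.carrier) ^ n *
        RingHom.ker (ArtAlg.toAlg f).toRingHom = ⊥ → RelSurj α f := by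
  intro n
  induction n with
  | zero =>
    intro A B f hf h
    rw [pow_zero, Ideal.one_eq_top, Ideal.top_mul] at h
    have hinj : Function.Injective (ArtAlg.toAlg f) := by
      rw [injective_iff_map_eq_zero]
      intro a ha
      have : a ∈ RingHom.ker (ArtAlg.toAlg f).toRingHom := RingHom.mem_ker.mpr ha
      rw [h] at this
      simpa using this
    let e : B ⟶ A := ((AlgEquiv.ofBijective (ArtAlg.toAlg f) ⟨hinj, hf⟩).symm : _ →ₐ[Λ] _)
    have h1 : f ≫ e = 𝟙 A := AlgHom.ext fun a =>
      (AlgEquiv.ofBijective (ArtAlg.toAlg f) ⟨hinj, hf⟩).symm_apply_apply a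
    have h2 : e ≫ f = 𝟙 B := AlgHom.ext fun b =>
      (AlgEquiv.ofBijective (ArtAlg.toAlg f) ⟨hinj, hf⟩).apply_symm_apply b
    exact aux_relSurj_of_inverse α f e h1 h2
  | succ n ih =>
    intro A B f hf hpow
    set I := RingHom.ker (ArtAlg.toAlg f).toRingHom with hI
    set J := IsLocalRing.maximalIdeal A.carrier * I with hJdef
    have hJle : J ≤ IsLocalRing.maximalIdeal A.carrier := Ideal.mul_le_left
    have hJI : J ≤ I := Ideal.mul_le_right
    have hvan : ∀ a ∈ J, ArtAlg.toAlg f a = 0 := fun a ha => RingHom.mem_ker.mp (hJI ha)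
    set p := ArtAlg.quotMk A J hJle with hp
    set g := ArtAlg.quotLift A J hJle B f hvan with hg
    have hpsurj : ArtAlg.Surjective p := Ideal.Quotient.mkₐ_surjective Λ J
    have hpker : RingHom.ker (ArtAlg.toAlg p).toRingHom = J := Ideal.Quotient.mkₐ_ker Λ J
    have hrelp : RelSurj α p := by
      apply ih p hpsurj
      rw [hpker, hJdef, ← mul_assoc, ← pow_succ]
      exact hpow
    have hgsurj : ArtAlg.Surjective g := by
      intro b
      obtain ⟨a, ha⟩ := hf b
      exact ⟨Ideal.Quotient.mk J a, ha⟩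
    have hgsmall : IsLocalRing.maximalIdeal (ArtAlg.quotArt A J hJle).carrier *
        RingHom.ker (ArtAlg.toAlg g).toRingHom = ⊥ := by
      rw [eq_bot_iff]
      refine Ideal.mul_le.mpr fun r hr s hs => ?_
      obtain ⟨a, rfl⟩ := Ideal.Quotient.mk_surjective r
      obtain ⟨c, rfl⟩ := Ideal.Quotient.mk_surjective s
      have hamem : a ∈ IsLocalRing.maximalIdeal A.carrier := by
        rw [IsLocalRing.mem_maximalIdeal, mem_nonunits_iff]
        intro hu
        have : IsUnit (Ideal.Quotient.mk J a) := hu.map (Ideal.Quotient.mk J)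
        exact ((IsLocalRing.mem_maximalIdeal _).mp hr) this
      have hcmem : c ∈ I := by
        rw [hI]
        exact RingHom.mem_ker.mpr (RingHom.mem_ker.mp hs)
      rw [Ideal.mem_bot]
      have : (Ideal.Quotient.mk J a) * (Ideal.Quotient.mk J c) =
          Ideal.Quotient.mk J (a * c) := rfl
      refine this.trans ?_
      exact Ideal.Quotient.eq_zero_iff_mem.mpr (Ideal.mul_mem_mul hamem hcmem)
    have hrelg : RelSurj α g := aux_relSurj_of_small α hq g hgsurj hgsmall
    have hfeq : p ≫ g = f := ArtAlg.quotMk_comp_quotLift A J hJle B f hvan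
    rw [← hfeq]
    exact aux_relSurj_comp α hrelp hrelg

lemma aux_sp_of_quasi (hq : CSpQuasiSmooth (Functor.whiskerLeft ev0 α)) : SpSmooth α := by
  intro A B f hf
  obtain ⟨n, _, hn⟩ := aux_artin_nilpotent A
  exact aux_relSurj_of_surj α hq n f hf (by rw [hn, Ideal.bot_mul])

lemma aux_csp_of_sp (hs : SpSmooth α) : CSpSmooth (Functor.whiskerLeft ev0 α) := by
  intro A B u hu
  have hsurj : ArtAlg.Surjective (ev0.map u) := hu.1 (op ⦋0⦌)
  exact (hs (ev0.map u) hsurj : RelSurj α (ev0.map u))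

end Assembly

/-! ## Statement 2 -/

/-- Lemma 1.16: for a morphism `α : F → G` of left-exact
set-valued functors on `C_Λ`, smoothness, quasi-smoothness of the induced
morphism in `cSp`, and smoothness of the induced morphism in `cSp` are all
equivalent. -/
theorem spSmooth_iff_induced_quasiSmooth_iff_induced_smooth
    {F G : ArtAlg Λ ⥤ Type} [Limits.PreservesFiniteLimits F] [Limits.PreservesFiniteLimits G]
    (α : F ⟶ G) :
    (SpSmooth α ↔ CSpQuasiSmooth (Functor.whiskerLeft ev0 α)) ∧
    (CSpQuasiSmooth (Functor.whiskerLeft ev0 α) ↔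
      CSpSmooth (Functor.whiskerLeft ev0 α)) := by
  constructor
  · constructor
    · intro hs A B u hu
      exact aux_csp_of_sp α hs u hu.1
    · intro hq
      exact aux_sp_of_quasi α hq
  · constructor
    · intro hq
      exact aux_csp_of_sp α (aux_sp_of_quasi α hq)
    · intro hs A B u hu
      exact hs u hu.1
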